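/- In the setting of the approximate remote state preparation protocol: let ρ₀ be positive semidefinite on ℂ^D with support projector P, L = Σ_x √λ_x (|x⟩⟨x|)ᵀ + c(I−P)ᵀ from its spectral decomposition, |Ψ_m⟩ = N(I⊗L)|Ψ⟩ with N = √(D/Tr(L†L)), 0 < ε < 1, p_res = ε/(1+ε), and let ρ_V satisfy (1−ε)ρ₀ ≤ ρ_V ≤ (1+ε)ρ₀ with τ_res = ((1+ε)/ε)Pᵀ − (1/ε)(L^{-1})† ρ_Vᵀ L^{-1}. Then the conditional probability of a 'fake success' satisfies ⟨Ψ_m|(P ⊗ p_res τ_res)|Ψ_m⟩ / ⟨Ψ_m|(P ⊗ Pᵀ)|Ψ_m⟩ ≤ 2ε/(1+ε). -/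

import Mathlib

open Matrix MeasureTheory
open scoped Kronecker ComplexOrder

noncomputable section

/-- The positive semidefinite square root of a matrix (junk value `0` if not PSD). -/
def matSqrt {ι : Type*} [Fintype ι] [DecidableEq ι] (A : Matrix ι ι ℂ) : Matrix ι ι ℂ :=
  open Classical in if h : A.PosSemidef then
    (h.1.eigenvectorUnitary.1 * diagonal ((↑) ∘ (Real.sqrt ∘ h.1.eigenvalues)) *
      (star h.1.eigenvectorUnitary : Matrix ι ι ℂ)) else 0

/-- The matrix absolute value `|X| = √(XᴴX)`. -/
def matAbs {ι : Type*} [Fintype ι] [DecidableEq ι] (X : Matrix ι ι ℂ) : Matrix ι ι ℂ :=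
  matSqrt (Xᴴ * X)

/-- Uhlmann fidelity `F(ρ,σ) = (Tr|√ρ√σ|)²`. -/
def fid {ι : Type*} [Fintype ι] [DecidableEq ι] (ρ σ : Matrix ι ι ℂ) : ℝ :=
  ((matAbs (matSqrt ρ * matSqrt σ)).trace).re ^ 2

/-- A density matrix: positive semidefinite with unit trace. -/
def IsDensity {ι : Type*} [Fintype ι] [DecidableEq ι] (ρ : Matrix ι ι ℂ) : Prop :=
  ρ.PosSemidef ∧ ρ.trace = 1

/-- The rank-one projector `|ψ⟩⟨ψ|`. -/
def ketbra {ι : Type*} (ψ : ι → ℂ) : Matrix ι ι ℂ := Matrix.vecMulVec ψ (star ψ)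

/-- The `l`-fold tensor power of a matrix on `ℂ^d`, acting on `(ℂ^d)^{⊗l}`. -/
def tpow {d : ℕ} (M : Matrix (Fin d) (Fin d) ℂ) (l : ℕ) :
    Matrix (Fin l → Fin d) (Fin l → Fin d) ℂ :=
  Matrix.of fun f g => ∏ i, M (f i) (g i)

/-- Loewner order: `A ⪯ B` iff `B - A` is positive semidefinite. -/
def loewnerLE {ι : Type*} [Fintype ι] (A B : Matrix ι ι ℂ) : Prop := (B - A).PosSemidef

/-- Projector onto the symmetric subspace of `(ℂ^d)^{⊗l}`:
`(1/l!) Σ_{π ∈ S_l} U_π` where `U_π` permutes the tensor factors. -/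
def symProj (d l : ℕ) : Matrix (Fin l → Fin d) (Fin l → Fin d) ℂ :=
  (l.factorial : ℂ)⁻¹ •
    ∑ π : Equiv.Perm (Fin l), Matrix.of fun f g => if f = (fun i => g (π i)) then (1 : ℂ) else 0


/-- Partial trace over the second tensor factor. -/
def ptraceB {D : ℕ} (M : Matrix (Fin D × Fin D) (Fin D × Fin D) ℂ) :
    Matrix (Fin D) (Fin D) ℂ :=
  Matrix.of fun i j => ∑ k, M (i, k) (j, k)

/-- The maximally entangled vector `(1/√D) Σᵢ |i⟩⊗|i⟩` on `ℂ^D ⊗ ℂ^D`. -/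
def maxEnt (D : ℕ) : Fin D × Fin D → ℂ :=
  fun q => if q.1 = q.2 then ((Real.sqrt D : ℝ) : ℂ)⁻¹ else 0


lemma psd_trace_re_nonneg {n : Type*} [Fintype n] [DecidableEq n] {A : Matrix n n ℂ}
    (hA : A.PosSemidef) : 0 ≤ A.trace.re := by
  have h : ∀ i, 0 ≤ (A i i).re := by
    intro i
    have := hA.re_dotProduct_nonneg (Pi.single i 1)
    simpa [dotProduct, mulVec, Pi.single_apply] using this
  simp only [Matrix.trace, Matrix.diag, Complex.re_sum]
  exact Finset.sum_nonneg fun i _ => h i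

lemma ketbra_mul_ketbra {D : Type*} [Fintype D] (u v : D → ℂ) :
    ketbra u * ketbra v = (star u ⬝ᵥ v) • Matrix.vecMulVec u (star v) := by
  ext i j
  simp [ketbra, Matrix.mul_apply, Matrix.vecMulVec_apply, dotProduct, Finset.mul_sum,
    Finset.sum_mul]
  congr 1; ext k; ring

lemma ketbra_conjTranspose {D : Type*} (u : D → ℂ) : (ketbra u)ᴴ = ketbra u := by
  ext i j; simp [ketbra, Matrix.vecMulVec_apply, mul_comm]

lemma trace_ketbra {D : Type*} [Fintype D] (u : D → ℂ) :
    (ketbra u).trace = star u ⬝ᵥ u := by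
  simp [ketbra, Matrix.trace, Matrix.diag, Matrix.vecMulVec_apply, dotProduct, mul_comm]

lemma trace_expand {D : ℕ} (A B L : Matrix (Fin D) (Fin D) ℂ) :
    (A * Lᵀ * Bᵀ * Lᴴᵀ).trace
      = ∑ i, ∑ j, ∑ k, ∑ l, A i k * L l k * B j l * (starRingEnd ℂ) (L j i) := by
  simp only [Matrix.trace, Matrix.diag, Matrix.mul_apply, Matrix.transpose_apply,
    Matrix.conjTranspose_apply, Finset.sum_mul, RCLike.star_def]
  apply Finset.sum_congr rfl; intro i _
  apply Finset.sum_congr rfl; intro j _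
  conv_lhs => rw [Finset.sum_comm]

lemma kron_inner {D : ℕ} (hD : 1 ≤ D) (A B L : Matrix (Fin D) (Fin D) ℂ) :
    star ((1 ⊗ₖ L) *ᵥ maxEnt D) ⬝ᵥ ((A ⊗ₖ B) *ᵥ ((1 ⊗ₖ L) *ᵥ maxEnt D))
      = (D : ℂ)⁻¹ * (A * Lᵀ * Bᵀ * Lᴴᵀ).trace := by
  have hv : (1 ⊗ₖ L) *ᵥ maxEnt D = fun p => ((Real.sqrt D : ℝ) : ℂ)⁻¹ * L p.2 p.1 := by
    ext ⟨i, j⟩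
    simp [mulVec, dotProduct, maxEnt, Fintype.sum_prod_type, one_apply, mul_ite, ite_mul,
      mul_comm]
  rw [hv, trace_expand]
  have hs : (starRingEnd ℂ) (((Real.sqrt D : ℝ) : ℂ))⁻¹ * (((Real.sqrt D : ℝ) : ℂ))⁻¹
      = (D : ℂ)⁻¹ := by
    rw [map_inv₀, Complex.conj_ofReal,
      ← mul_inv, ← Complex.ofReal_mul, Real.mul_self_sqrt (by positivity)]
    push_cast
    ring
  simp only [dotProduct, Pi.star_apply, mulVec, kroneckerMap_apply, Fintype.sum_prod_type,
    star_mul', RCLike.star_def, Finset.mul_sum]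
  apply Finset.sum_congr rfl; intro i _
  apply Finset.sum_congr rfl; intro j _
  apply Finset.sum_congr rfl; intro k _
  apply Finset.sum_congr rfl; intro l _
  rw [← hs]; ring


/-- the conditional probability of a 'fake success' in the approximate
remote state preparation protocol is at most `2ε/(1+ε)`. -/
theorem remote_preparation_fake_success_probability
    (D : ℕ) (hD : 1 ≤ D)
    (κ : Type*) [Fintype κ] [DecidableEq κ]
    (x : κ → (Fin D → ℂ)) (hx : ∀ a b, star (x a) ⬝ᵥ x b = (if a = b then (1 : ℂ) else 0))
    (lam : κ → ℝ) (hlam : ∀ a, 0 < lam a)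
    (ρ₀ : Matrix (Fin D) (Fin D) ℂ) (hρ₀ : ρ₀ = ∑ a, (lam a : ℂ) • ketbra (x a))
    (P : Matrix (Fin D) (Fin D) ℂ) (hP : P = ∑ a, ketbra (x a))
    (c : ℂ) (hc : c ≠ 0)
    (L : Matrix (Fin D) (Fin D) ℂ)
    (hL : L = (∑ a, ((Real.sqrt (lam a) : ℝ) : ℂ) • (ketbra (x a))ᵀ) + c • (1 - P)ᵀ)
    (N : ℝ) (hN : N = Real.sqrt (D / ((Lᴴ * L).trace).re))
    (Ψm : Fin D × Fin D → ℂ)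
    (hΨm : Ψm = (N : ℂ) • ((1 : Matrix (Fin D) (Fin D) ℂ) ⊗ₖ L).mulVec (maxEnt D))
    (ε : ℝ) (hε0 : 0 < ε) (hε1 : ε < 1)
    (ρV : Matrix (Fin D) (Fin D) ℂ)
    (hlo : loewnerLE (((1 - ε : ℝ) : ℂ) • ρ₀) ρV)
    (hhi : loewnerLE ρV (((1 + ε : ℝ) : ℂ) • ρ₀))
    (τres : Matrix (Fin D) (Fin D) ℂ)
    (hτ : τres = (((1 + ε) / ε : ℝ) : ℂ) • Pᵀ -
      ((ε⁻¹ : ℝ) : ℂ) • ((L⁻¹)ᴴ * ρVᵀ * L⁻¹)) :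
    (star Ψm ⬝ᵥ ((P ⊗ₖ (((ε / (1 + ε) : ℝ) : ℂ) • τres)).mulVec Ψm)).re
      / (star Ψm ⬝ᵥ ((P ⊗ₖ Pᵀ).mulVec Ψm)).re ≤ 2 * ε / (1 + ε) := by
  -- dispose of the degenerate case κ empty
  rcases isEmpty_or_nonempty κ with hκ | hκ
  · have hP0 : P = 0 := by rw [hP]; simp
    rw [hP0]
    simp only [Matrix.zero_kronecker, Matrix.zero_mulVec, dotProduct_zero, Complex.zero_re,
      zero_div]
    positivity
  -- basic sum-product machinery
  have kb_mul : ∀ a b : κ, ketbra (x a) * ketbra (x b)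
      = if a = b then ketbra (x a) else 0 := by
    intro a b
    rw [ketbra_mul_ketbra, hx]
    by_cases h : a = b
    · subst h; simp [ketbra]
    · simp [h]
  have sum_mul_sum : ∀ f g : κ → ℂ,
      (∑ a, f a • ketbra (x a)) * (∑ b, g b • ketbra (x b))
        = ∑ a, (f a * g a) • ketbra (x a) := by
    intro f g
    rw [Finset.sum_mul]
    apply Finset.sum_congr rfl; intro a _
    rw [Finset.mul_sum]
    have : ∀ b, (f a • ketbra (x a)) * (g b • ketbra (x b))
        = if a = b then (f a * g b) • ketbra (x a) else 0 := by
      intro b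
      rw [Matrix.smul_mul, Matrix.mul_smul, kb_mul]
      by_cases h : a = b <;> simp [h, smul_smul, mul_comm]
    simp only [this, Finset.sum_ite_eq, Finset.mem_univ, if_true]
  -- notation
  set M : Matrix (Fin D) (Fin D) ℂ := ∑ a, ((Real.sqrt (lam a) : ℝ) : ℂ) • ketbra (x a)
    with hMdef
  have hPsum : P = ∑ a, (1 : ℂ) • ketbra (x a) := by rw [hP]; simp
  -- projections and products
  have hPP : P * P = P := by
    rw [hPsum, sum_mul_sum]; simp
  have hPM : P * M = M := by
    rw [hPsum, hMdef, sum_mul_sum]; simp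
  have hMP : M * P = M := by
    rw [hPsum, hMdef, sum_mul_sum]; simp
  have hMM : M * M = ρ₀ := by
    rw [hMdef, sum_mul_sum, hρ₀]
    apply Finset.sum_congr rfl; intro a _
    rw [← Complex.ofReal_mul, Real.mul_self_sqrt (hlam a).le]
  have hPρ₀ : P * ρ₀ = ρ₀ := by
    rw [hPsum, hρ₀, sum_mul_sum]; simp
  -- Hermitian-ness of P, M
  have hPH : Pᴴ = P := by
    rw [hP, Matrix.conjTranspose_sum]
    exact Finset.sum_congr rfl fun a _ => ketbra_conjTranspose _
  have hMH : Mᴴ = M := by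
    rw [hMdef, Matrix.conjTranspose_sum]
    apply Finset.sum_congr rfl; intro a _
    rw [Matrix.conjTranspose_smul, ketbra_conjTranspose, Complex.star_def,
      Complex.conj_ofReal]
  -- M kills 1 - P on both sides
  have hM1P : M * (1 - P) = 0 := by
    rw [Matrix.mul_sub, Matrix.mul_one, hMP, sub_self]
  have h1PM : (1 - P) * M = 0 := by
    rw [Matrix.sub_mul, Matrix.one_mul, hPM, sub_self]
  -- transpose and conjugate of L
  have hLt : Lᵀ = M + c • (1 - P) := by
    rw [hL, Matrix.transpose_add, Matrix.transpose_sum, Matrix.transpose_smul,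
      Matrix.transpose_transpose, hMdef]
    congr 1
  have hLbar : Lᴴᵀ = M + (starRingEnd ℂ c) • (1 - P) := by
    have h1 : (Lᵀ)ᴴ = (M + c • (1 - P))ᴴ := by rw [hLt]
    rw [show Lᴴᵀ = (Lᵀ)ᴴ from rfl, h1, Matrix.conjTranspose_add, Matrix.conjTranspose_smul,
      hMH, Matrix.conjTranspose_sub, Matrix.conjTranspose_one, hPH, Complex.star_def]
  -- the explicit inverse of Lᵀ
  set K : Matrix (Fin D) (Fin D) ℂ :=
    (∑ a, (((Real.sqrt (lam a))⁻¹ : ℝ) : ℂ) • ketbra (x a)) + c⁻¹ • (1 - P) with hKdef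
  have hsql : ∀ a : κ, Real.sqrt (lam a) ≠ 0 := fun a =>
    ne_of_gt (Real.sqrt_pos.mpr (hlam a))
  have hMK0 : M * (∑ a, (((Real.sqrt (lam a))⁻¹ : ℝ) : ℂ) • ketbra (x a)) = P := by
    rw [hMdef, sum_mul_sum, hPsum]
    apply Finset.sum_congr rfl; intro a _
    rw [← Complex.ofReal_mul, mul_inv_cancel₀ (hsql a)]
    norm_num
  have hK0M : (∑ a, (((Real.sqrt (lam a))⁻¹ : ℝ) : ℂ) • ketbra (x a)) * M = P := by
    rw [hMdef, sum_mul_sum, hPsum]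
    apply Finset.sum_congr rfl; intro a _
    rw [← Complex.ofReal_mul, inv_mul_cancel₀ (hsql a)]
    norm_num
  have hK0P : (∑ a, (((Real.sqrt (lam a))⁻¹ : ℝ) : ℂ) • ketbra (x a)) * P
      = (∑ a, (((Real.sqrt (lam a))⁻¹ : ℝ) : ℂ) • ketbra (x a)) := by
    rw [hPsum, sum_mul_sum]; simp
  have hPK0 : P * (∑ a, (((Real.sqrt (lam a))⁻¹ : ℝ) : ℂ) • ketbra (x a))
      = (∑ a, (((Real.sqrt (lam a))⁻¹ : ℝ) : ℂ) • ketbra (x a)) := by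
    rw [hPsum, sum_mul_sum]; simp
  have h1P1P : (1 - P) * (1 - P) = 1 - P := by
    simp [Matrix.sub_mul, Matrix.mul_sub, hPP]
  have hK1 : Lᵀ * K = 1 := by
    rw [hLt, hKdef, Matrix.add_mul, Matrix.mul_add, Matrix.mul_add]
    rw [hMK0]
    have e1 : M * (c⁻¹ • (1 - P)) = 0 := by rw [Matrix.mul_smul, hM1P, smul_zero]
    have e2 : (c • (1 - P)) * (∑ a, (((Real.sqrt (lam a))⁻¹ : ℝ) : ℂ) • ketbra (x a))
        = 0 := by
      rw [Matrix.smul_mul]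
      have : (1 - P) * (∑ a, (((Real.sqrt (lam a))⁻¹ : ℝ) : ℂ) • ketbra (x a)) = 0 := by
        rw [Matrix.sub_mul, Matrix.one_mul, hPK0, sub_self]
      rw [this, smul_zero]
    have e3 : (c • (1 - P)) * (c⁻¹ • (1 - P)) = 1 - P := by
      rw [Matrix.smul_mul, Matrix.mul_smul, h1P1P, smul_smul, mul_inv_cancel₀ hc, one_smul]
    rw [e1, e2, e3, add_zero, zero_add, add_sub_cancel]
  have hK2 : K * Lᵀ = 1 := by
    rw [hLt, hKdef, Matrix.add_mul, Matrix.mul_add, Matrix.mul_add]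
    rw [hK0M]
    have e1 : (∑ a, (((Real.sqrt (lam a))⁻¹ : ℝ) : ℂ) • ketbra (x a)) * (c • (1 - P))
        = 0 := by
      rw [Matrix.mul_smul]
      have : (∑ a, (((Real.sqrt (lam a))⁻¹ : ℝ) : ℂ) • ketbra (x a)) * (1 - P) = 0 := by
        rw [Matrix.mul_sub, Matrix.mul_one, hK0P, sub_self]
      rw [this, smul_zero]
    have e2 : (c⁻¹ • (1 - P)) * M = 0 := by rw [Matrix.smul_mul, h1PM, smul_zero]
    have e3 : (c⁻¹ • (1 - P)) * (c • (1 - P)) = 1 - P := by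
      rw [Matrix.smul_mul, Matrix.mul_smul, h1P1P, smul_smul, inv_mul_cancel₀ hc, one_smul]
    rw [e1, e2, e3, add_zero, zero_add, add_sub_cancel]
  -- L is invertible with inverse Kᵀ
  have hLK : L * Kᵀ = 1 := by
    have h := congrArg Matrix.transpose hK2
    rwa [Matrix.transpose_mul, Matrix.transpose_transpose, Matrix.transpose_one] at h
  have hKL : Kᵀ * L = 1 := by
    have h := congrArg Matrix.transpose hK1
    rwa [Matrix.transpose_mul, Matrix.transpose_transpose, Matrix.transpose_one] at h
  have hLinv : L⁻¹ = Kᵀ := Matrix.inv_eq_right_inv hLK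
  have hKbar : Kᴴ * Lᴴᵀ = 1 := by
    have h := congrArg (fun Y : Matrix (Fin D) (Fin D) ℂ => (Yᴴ)ᵀ) hKL
    simp only [Matrix.conjTranspose_mul, Matrix.transpose_mul, Matrix.conjTranspose_one,
      Matrix.transpose_one] at h
    exact h
  -- trace of ρ₀
  have htrρ₀ : ρ₀.trace = ((∑ a, lam a : ℝ) : ℂ) := by
    rw [hρ₀, Matrix.trace_sum]
    push_cast
    apply Finset.sum_congr rfl; intro a _
    rw [Matrix.trace_smul, trace_ketbra, hx a a]
    simp
  set T : ℝ := ∑ a, lam a with hTdef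
  have hT : 0 < T := Finset.sum_pos (fun a _ => hlam a) Finset.univ_nonempty
  -- lower bound on Re tr(P ρV)
  set S : ℂ := (P * ρV).trace with hSdef
  have hS : (1 - ε) * T ≤ S.re := by
    have hΔ : (ρV - ((1 - ε : ℝ) : ℂ) • ρ₀).PosSemidef := hlo
    have hpsd := hΔ.mul_mul_conjTranspose_same P
    rw [hPH] at hpsd
    have h0 := psd_trace_re_nonneg hpsd
    have htr : (P * (ρV - ((1 - ε : ℝ) : ℂ) • ρ₀) * P).trace
        = S - ((1 - ε : ℝ) : ℂ) * (T : ℂ) := by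
      rw [Matrix.trace_mul_cycle, hPP, Matrix.mul_sub, Matrix.mul_smul, hPρ₀,
        Matrix.trace_sub, Matrix.trace_smul, htrρ₀, smul_eq_mul, hSdef]
    rw [htr] at h0
    have : (S - ((1 - ε : ℝ) : ℂ) * (T : ℂ)).re = S.re - (1 - ε) * T := by
      rw [← Complex.ofReal_mul]
      simp [Complex.sub_re, Complex.ofReal_re]
    linarith [this ▸ h0]
  -- key matrix products
  have hP1P : P * (1 - P) = 0 := by
    rw [Matrix.mul_sub, Matrix.mul_one, hPP, sub_self]
  have hPLt : P * Lᵀ = M := by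
    rw [hLt, Matrix.mul_add, hPM, Matrix.mul_smul, hP1P, smul_zero, add_zero]
  have hMLbar : M * Lᴴᵀ = ρ₀ := by
    rw [hLbar, Matrix.mul_add, hMM, Matrix.mul_smul, hM1P, smul_zero, add_zero]
  have hden_mat : P * Lᵀ * P * Lᴴᵀ = ρ₀ := by
    rw [hPLt, hMP, hMLbar]
  have hτt : τresᵀ = (((1 + ε) / ε : ℝ) : ℂ) • P - ((ε⁻¹ : ℝ) : ℂ) • (K * ρV * Kᴴ) := by
    rw [hτ, hLinv, Matrix.transpose_sub, Matrix.transpose_smul, Matrix.transpose_smul,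
      Matrix.transpose_transpose, Matrix.transpose_mul, Matrix.transpose_mul,
      Matrix.transpose_transpose, show ((Kᵀ)ᴴ)ᵀ = Kᴴ by
        rw [show (Kᵀ)ᴴ = (Kᴴ)ᵀ from rfl, Matrix.transpose_transpose]]
    rw [Matrix.mul_assoc, Matrix.transpose_transpose]
  have hterm2 : P * Lᵀ * (K * ρV * Kᴴ) * Lᴴᵀ = P * ρV := by
    simp only [Matrix.mul_assoc]
    rw [hKbar, Matrix.mul_one, ← Matrix.mul_assoc Lᵀ K ρV, hK1, Matrix.one_mul]
  -- evaluate the two inner products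
  have hstarΨ : star Ψm = (N : ℂ) • star ((1 ⊗ₖ L) *ᵥ maxEnt D) := by
    rw [hΨm, star_smul]
    congr 1
    rw [Complex.star_def, Complex.conj_ofReal]
  have hDc : ((D : ℂ))⁻¹ = (((D : ℝ)⁻¹ : ℝ) : ℂ) := by push_cast; ring
  have hden : (star Ψm ⬝ᵥ ((P ⊗ₖ Pᵀ) *ᵥ Ψm)) = (N : ℂ) * ((N : ℂ) * ((D : ℂ)⁻¹ * (T : ℂ))) := by
    rw [hstarΨ, hΨm, Matrix.mulVec_smul, dotProduct_smul, smul_dotProduct, kron_inner hD,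
      Matrix.transpose_transpose, hden_mat, htrρ₀, smul_eq_mul, smul_eq_mul]
  have hnum_mat : P * Lᵀ * (((ε / (1 + ε) : ℝ) : ℂ) • τres)ᵀ * Lᴴᵀ
      = ((ε / (1 + ε) : ℝ) : ℂ) •
        ((((1 + ε) / ε : ℝ) : ℂ) • ρ₀ - ((ε⁻¹ : ℝ) : ℂ) • (P * ρV)) := by
    rw [Matrix.transpose_smul, hτt]
    simp only [Matrix.mul_sub, Matrix.sub_mul, Matrix.mul_smul, Matrix.smul_mul]
    rw [hden_mat, hterm2]
  have htr_num : (P * Lᵀ * (((ε / (1 + ε) : ℝ) : ℂ) • τres)ᵀ * Lᴴᵀ).trace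
      = ((ε / (1 + ε) : ℝ) : ℂ) *
        ((((1 + ε) / ε : ℝ) : ℂ) * (T : ℂ) - ((ε⁻¹ : ℝ) : ℂ) * S) := by
    rw [hnum_mat, Matrix.trace_smul, Matrix.trace_sub, Matrix.trace_smul, Matrix.trace_smul,
      htrρ₀, smul_eq_mul, smul_eq_mul, smul_eq_mul, hSdef]
  have hnum : star Ψm ⬝ᵥ ((P ⊗ₖ (((ε / (1 + ε) : ℝ) : ℂ) • τres)) *ᵥ Ψm)
      = (N : ℂ) * ((N : ℂ) * ((D : ℂ)⁻¹ * (((ε / (1 + ε) : ℝ) : ℂ) *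
        ((((1 + ε) / ε : ℝ) : ℂ) * (T : ℂ) - ((ε⁻¹ : ℝ) : ℂ) * S)))) := by
    rw [hstarΨ, hΨm, Matrix.mulVec_smul, dotProduct_smul, smul_dotProduct, kron_inner hD,
      htr_num, smul_eq_mul, smul_eq_mul]
  -- real parts
  have hre : ∀ (r : ℝ) (z : ℂ), ((r : ℂ) * z).re = r * z.re := by
    intro r z; simp [Complex.mul_re]
  have hden_re : (star Ψm ⬝ᵥ ((P ⊗ₖ Pᵀ) *ᵥ Ψm)).re = N * (N * ((D : ℝ)⁻¹ * T)) := by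
    rw [hden, hDc, hre, hre, hre, Complex.ofReal_re]
  have hnum_re : (star Ψm ⬝ᵥ ((P ⊗ₖ (((ε / (1 + ε) : ℝ) : ℂ) • τres)) *ᵥ Ψm)).re
      = N * (N * ((D : ℝ)⁻¹ * ((ε / (1 + ε)) *
        ((1 + ε) / ε * T - ε⁻¹ * S.re)))) := by
    rw [hnum, hDc, hre, hre, hre, hre, Complex.sub_re, hre, hre, Complex.ofReal_re]
  -- positivity of N
  have hLne : L ≠ 0 := by
    intro h
    have h1 := hLK
    rw [h, Matrix.zero_mul] at h1
    have h2 := congrFun (congrFun h1 ⟨0, hD⟩) ⟨0, hD⟩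
    simp [Matrix.one_apply] at h2
  have hexp : ((Lᴴ * L).trace).re = ∑ j, ∑ i, Complex.normSq (L i j) := by
    simp only [Matrix.trace, Matrix.diag, Matrix.mul_apply, Matrix.conjTranspose_apply,
      Complex.re_sum]
    apply Finset.sum_congr rfl; intro j _
    apply Finset.sum_congr rfl; intro i _
    simp [Complex.mul_re, Complex.normSq_apply, RCLike.star_def]
  have hrpos : 0 < ((Lᴴ * L).trace).re := by
    by_contra hcon
    push_neg at hcon
    have hnn : (0 : ℝ) ≤ ∑ j, ∑ i, Complex.normSq (L i j) :=
      Finset.sum_nonneg fun j _ => Finset.sum_nonneg fun i _ => Complex.normSq_nonneg _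
    have hz : ∑ j, ∑ i, Complex.normSq (L i j) = 0 := le_antisymm (hexp ▸ hcon) hnn
    apply hLne
    ext i j
    have h1 := (Finset.sum_eq_zero_iff_of_nonneg
      (fun j' _ => Finset.sum_nonneg fun i' _ => Complex.normSq_nonneg (L i' j'))).mp hz
      j (Finset.mem_univ j)
    have h2 := (Finset.sum_eq_zero_iff_of_nonneg
      (fun i' _ => Complex.normSq_nonneg (L i' j))).mp h1 i (Finset.mem_univ i)
    simpa using Complex.normSq_eq_zero.mp h2
  have hDgt : (0 : ℝ) < (D : ℝ) := by exact_mod_cast Nat.lt_of_lt_of_le Nat.zero_lt_one hD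
  have hNpos : 0 < N := by
    rw [hN]
    exact Real.sqrt_pos.mpr (div_pos hDgt hrpos)
  -- final arithmetic
  rw [hnum_re, hden_re]
  have hdenpos : 0 < N * (N * ((D : ℝ)⁻¹ * T)) :=
    mul_pos hNpos (mul_pos hNpos (mul_pos (inv_pos.mpr hDgt) hT))
  rw [div_le_iff₀ hdenpos]
  have hX : (1 + ε) / ε * T - ε⁻¹ * S.re ≤ 2 * T := by
    have h1 : ε⁻¹ * ((1 - ε) * T) ≤ ε⁻¹ * S.re :=
      mul_le_mul_of_nonneg_left hS (inv_nonneg.mpr hε0.le)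
    have h2 : (1 + ε) / ε * T - ε⁻¹ * ((1 - ε) * T) = 2 * T := by
      field_simp
      ring
    linarith
  have hp : 0 < ε / (1 + ε) := div_pos hε0 (by linarith)
  calc N * (N * ((D : ℝ)⁻¹ * (ε / (1 + ε) * ((1 + ε) / ε * T - ε⁻¹ * S.re))))
      ≤ N * (N * ((D : ℝ)⁻¹ * (ε / (1 + ε) * (2 * T)))) := by
        apply mul_le_mul_of_nonneg_left _ hNpos.le
        apply mul_le_mul_of_nonneg_left _ hNpos.le
        apply mul_le_mul_of_nonneg_left _ (by positivity)
        exact mul_le_mul_of_nonneg_left hX hp.le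
    _ = 2 * ε / (1 + ε) * (N * (N * ((D : ℝ)⁻¹ * T))) := by ring
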